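/- Cross-ratio realization: let ξ, ξ̂ be lightlike with (ξ,ξ̂) = −1, and let η = ξ + y + ½(y,y)ξ̂ and ζ = ξ + z + ½(z,z)ξ̂ be Euclidean lifts with y, z ∈ ⟨ξ,ξ̂⟩^⊥ ≅ ℝⁿ. Then the Clifford cross ratio y⁻¹z equals r ∈ ℝ if and only if ζ = r·Γ_{⟨ξ⟩}^{⟨ξ̂⟩}(r)(η); in particular ⟨ζ⟩ = ⟨Γ_{⟨ξ⟩}^{⟨ξ̂⟩}(r)η⟩. -/

import Mathlib

noncomputable section
open CliffordAlgebra

/-- Euclidean n-space. -/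
abbrev E (n : ℕ) := EuclideanSpace ℝ (Fin n)

/-- The quadratic form of the standard inner product on ℝⁿ. -/
def QE (n : ℕ) : QuadraticForm ℝ (E n) := LinearMap.BilinMap.toQuadraticMap (innerₗ (E n))

/-- The Clifford-algebra inverse of a vector: v⁻¹ = v / |v|². -/
def cinv {n : ℕ} (v : E n) : CliffordAlgebra (QE n) := (QE n v)⁻¹ • ι (QE n) v

/-- The Minkowski space ℝ^{n+1,1} modelled as ℝ·o ⊕ ℝⁿ ⊕ ℝ·q, a vector (a, v, b)
standing for a·o + v + b·q with o, q lightlike and (o,q) = −1. -/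
abbrev M (n : ℕ) := ℝ × E n × ℝ

/-- The Minkowski bilinear form of signature (n+1,1). -/
def BM (n : ℕ) : LinearMap.BilinForm ℝ (M n) :=
  LinearMap.mk₂ ℝ (fun u v => (inner ℝ u.2.1 v.2.1 : ℝ) - u.1 * v.2.2 - v.1 * u.2.2)
    (by intros; simp [inner_add_left]; ring)
    (by intros; simp [inner_smul_left]; ring)
    (by intros; simp [inner_add_right]; ring)
    (by intros; simp [inner_smul_right]; ring)

/-- The point at the origin o. -/
def oM (n : ℕ) : M n := (1, 0, 0)

/-- The point at infinity q. -/
def qM (n : ℕ) : M n := (0, 0, 1)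

/-- The Euclidean lift ξ = o + x + ½(x,x)q of x ∈ ℝⁿ into the light cone. -/
def lift {n : ℕ} (x : E n) : M n := (1, x, (inner ℝ x x : ℝ) / 2)

/-- The derivative of the Euclidean lift along a curve: ξ' = x' + (x,x')q. -/
def liftD {n : ℕ} (x dx : E n) : M n := (0, dx, (inner ℝ x dx : ℝ))

/-- The transformation Γ_{⟨ξ⟩}^{⟨ξ̂⟩}(r): multiplication by 1/r on ⟨ξ⟩, by 1 on
⟨ξ,ξ̂⟩^⊥ and by r on ⟨ξ̂⟩. -/
def Gamma {n : ℕ} (ξ ξh : M n) (r : ℝ) : M n →ₗ[ℝ] M n where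
  toFun y := y + (((1/r - 1) * BM n y ξh) / BM n ξ ξh) • ξ
    + (((r - 1) * BM n y ξ) / BM n ξ ξh) • ξh
  map_add' y z := by simp [mul_add, add_div, add_smul]; abel
  map_smul' c y := by simp [mul_div_assoc, mul_assoc, mul_smul]; module


lemma QE_apply' {n : ℕ} (v : E n) : QE n v = (inner ℝ v v : ℝ) := rfl

lemma QE_ne_zero' {n : ℕ} {v : E n} (hv : v ≠ 0) : QE n v ≠ 0 := by
  rw [QE_apply']
  intro h
  exact hv (inner_self_eq_zero.mp h)

lemma key {n : ℕ} (y z : E n) (hy : y ≠ 0) (r : ℝ) :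
    cinv y * ι (QE n) z = algebraMap ℝ _ r ↔ z = r • y := by
  have hQ : QE n y ≠ 0 := QE_ne_zero' hy
  constructor
  · intro h
    have h2 := congrArg (fun a => ι (QE n) y * a) h
    simp only [cinv, smul_mul_assoc, mul_smul_comm, ← mul_assoc, ι_sq_scalar,
      Algebra.algebraMap_eq_smul_one, smul_mul_assoc, smul_smul, one_mul, mul_one] at h2
    rw [mul_comm (QE n y)⁻¹, mul_inv_cancel₀ hQ, one_smul] at h2
    have h3 : ι (QE n) (z - r • y) = 0 := by
      rw [map_sub, map_smul, h2, sub_self]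
    have h4 : algebraMap ℝ (CliffordAlgebra (QE n)) (QE n (z - r • y)) = 0 := by
      rw [← ι_sq_scalar, h3, mul_zero]
    have h5 : QE n (z - r • y) = 0 :=
      (algebraMap ℝ (CliffordAlgebra (QE n))).injective (by simpa using h4)
    rw [QE_apply', inner_self_eq_zero] at h5
    exact sub_eq_zero.1 h5
  · rintro rfl
    simp only [cinv, map_smul, smul_mul_assoc, mul_smul_comm, ι_sq_scalar,
      Algebra.algebraMap_eq_smul_one, smul_smul]
    rw [inv_mul_cancel₀ hQ, mul_one]

lemma gamma_eta {n : ℕ} (y : E n) (r : ℝ) (hr : r ≠ 0) (η : M n)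
    (hη : η = oM n + ((0 : ℝ), y, (0 : ℝ)) + ((inner ℝ y y : ℝ) / 2) • qM n) :
    r • Gamma (oM n) (qM n) r η = (1, r • y, r^2 * (inner ℝ y y : ℝ) / 2) := by
  subst hη
  simp only [Gamma, BM, oM, qM, LinearMap.coe_mk, AddHom.coe_mk, LinearMap.mk₂_apply,
    Prod.mk_add_mk, Prod.smul_mk, Prod.mk.injEq, smul_eq_mul, Prod.fst_add, Prod.snd_add,
    Prod.smul_fst, Prod.smul_snd]
  simp [Prod.ext_iff, inner_zero_right, inner_zero_left, smul_smul]
  constructor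
  · have h1 : (1:ℝ) + (1 - r⁻¹) / -1 = r⁻¹ := by ring
    rw [h1, mul_inv_cancel₀ hr]
  · ring

/-- cross-ratio realization. For Euclidean lifts
η = ξ + y + ½(y,y)ξ̂ and ζ = ξ + z + ½(z,z)ξ̂ (here ξ = o, ξ̂ = q), the Clifford cross
ratio y⁻¹z equals r ∈ ℝ iff ζ = r·Γ_{⟨ξ⟩}^{⟨ξ̂⟩}(r)(η); in particular
⟨ζ⟩ = ⟨Γ_{⟨ξ⟩}^{⟨ξ̂⟩}(r)η⟩. -/
theorem cross_ratio_realization {n : ℕ} (y z : E n) (hy : y ≠ 0) (hz : z ≠ 0)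
    (r : ℝ) (hr : r ≠ 0)
    (η ζ : M n)
    (hη : η = oM n + ((0 : ℝ), y, (0 : ℝ)) + ((inner ℝ y y : ℝ) / 2) • qM n)
    (hζ : ζ = oM n + ((0 : ℝ), z, (0 : ℝ)) + ((inner ℝ z z : ℝ) / 2) • qM n) :
    ((cinv y * ι (QE n) z = algebraMap ℝ _ r) ↔ ζ = r • Gamma (oM n) (qM n) r η)
    ∧ ((cinv y * ι (QE n) z = algebraMap ℝ _ r) →
        ∃ c : ℝ, c ≠ 0 ∧ Gamma (oM n) (qM n) r η = c • ζ) := by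
  have hzr : (cinv y * ι (QE n) z = algebraMap ℝ _ r) ↔ z = r • y := key y z hy r
  have hG : r • Gamma (oM n) (qM n) r η = (1, r • y, r^2 * (inner ℝ y y : ℝ) / 2) :=
    gamma_eta y r hr η hη
  have hζ' : ζ = (1, z, (inner ℝ z z : ℝ) / 2) := by
    subst hζ; simp [oM, qM, Prod.ext_iff]
  have main : (cinv y * ι (QE n) z = algebraMap ℝ _ r) ↔ ζ = r • Gamma (oM n) (qM n) r η := by
    rw [hzr, hG, hζ', Prod.ext_iff, Prod.ext_iff]
    constructor
    · rintro rfl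
      refine ⟨rfl, rfl, ?_⟩
      simp [real_inner_smul_left, real_inner_smul_right, Finset.mul_sum]
      ring_nf
      congr 1
      rw [norm_smul, mul_pow, Real.norm_eq_abs, sq_abs]
    · rintro ⟨-, h2, -⟩
      exact h2
  refine ⟨main, fun h => ⟨r⁻¹, inv_ne_zero hr, ?_⟩⟩
  have := main.mp h
  rw [this, smul_smul, inv_mul_cancel₀ hr, one_smul]
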